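/- arXiv:1901.10012 — 2 statements merged into one kernel-verified Lean document; each statement's English description precedes it below -/
import Mathlib

section
/- Let X be a real random variable with law μ_X ≪ L₁ and density ρ_X, let φ ∈ C¹(ℝ), and let Y = φ(X). Assume that Y has law μ_Y ≪ L₁ with density ρ_Y. Let γ = {(x, φ(x)) : x ∈ ℝ} and define ν₁(A) = ∫_{γ∩A} ρ_X(x)ρ_Y(y) dσ(x,y) (line integral with respect to arclength). Then the joint law μ of (X,Y) satisfies μ ≪ ν₁ and the function L(x, φ(x)) = 1/(ρ_Y(φ(x)) √(1 + φ'(x)²)) is a version of dμ/dν₁, i.e., ∫_A L dν₁ = μ(γ ∩ A) = μ(A) for all Borel A ⊆ ℝ². -/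
open MeasureTheory Set Filter Topology
open scoped ENNReal

/-- Let `X` have law `μ_X ≪ L₁` with density `ρ_X`, let `φ ∈ C¹(ℝ)`
and `Y = φ(X)`, with `Y` having density `ρ_Y`. Let `γ = {(x, φ(x))}` and
`ν₁(A) = ∫_{γ∩A} ρ_X(x)ρ_Y(y) dσ(x,y)` (line integral w.r.t. arclength, i.e. the
image under `x ↦ (x, φ(x))` of the measure with density
`ρ_X(x)ρ_Y(φ(x))√(1+φ'(x)²)`). Then `μ ≪ ν₁` and
`L(x,y) = 1/(ρ_Y(y)√(1+φ'(x)²))` is a version of `dμ/dν₁`: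
`∫_A L dν₁ = μ(A)` for all Borel `A`. -/
theorem stmt_10
    {Ω : Type*} [MeasurableSpace Ω] (ℙ : Measure Ω) [IsProbabilityMeasure ℙ]
    (X : Ω → ℝ) (hX : Measurable X)
    (φ : ℝ → ℝ) (hφ : ContDiff ℝ 1 φ)
    (ρX ρY : ℝ → ℝ) (hρXm : Measurable ρX) (hρYm : Measurable ρY)
    (hρX0 : ∀ x, 0 ≤ ρX x) (hρY0 : ∀ y, 0 ≤ ρY y)
    (hρX : ℙ.map X = volume.withDensity (fun x => ENNReal.ofReal (ρX x)))
    (hρY : ℙ.map (fun ω => φ (X ω)) = volume.withDensity (fun y => ENNReal.ofReal (ρY y)))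
    (μ : Measure (ℝ × ℝ))
    (hμ : μ = ℙ.map (fun ω => (X ω, φ (X ω))))
    (ν₁ : Measure (ℝ × ℝ))
    (hν₁ : ν₁ = (volume.withDensity
        (fun x => ENNReal.ofReal (ρX x * ρY (φ x) * Real.sqrt (1 + deriv φ x ^ 2)))).map
        (fun x => (x, φ x))) :
    μ ≪ ν₁ ∧
      ∀ A : Set (ℝ × ℝ), MeasurableSet A →
        ∫⁻ p in A,
            ENNReal.ofReal (1 / (ρY p.2 * Real.sqrt (1 + deriv φ p.1 ^ 2))) ∂ν₁
          = μ A := by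
  have hφm : Measurable φ := hφ.continuous.measurable
  have hf : Measurable (fun x : ℝ => (x, φ x)) := measurable_id.prodMk hφm
  set s : ℝ → ℝ := fun x => Real.sqrt (1 + deriv φ x ^ 2) with hsdef
  have hsm : Measurable s := (measurable_const.add ((measurable_deriv φ).pow_const 2)).sqrt
  have hspos : ∀ x, 0 < s x := fun x => Real.sqrt_pos.mpr (by positivity)
  set L : ℝ × ℝ → ℝ≥0∞ := fun p => ENNReal.ofReal (1 / (ρY p.2 * s p.1)) with hLdef
  have hLm : Measurable L := by
    apply ENNReal.measurable_ofReal.comp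
    exact (measurable_const.div ((hρYm.comp measurable_snd).mul (hsm.comp measurable_fst)))
  set g : ℝ → ℝ≥0∞ := fun x => ENNReal.ofReal (ρX x * ρY (φ x) * s x) with hgdef
  have hgm : Measurable g :=
    ENNReal.measurable_ofReal.comp ((hρXm.mul (hρYm.comp hφm)).mul hsm)
  -- a.e. x, ρY (φ x) = 0 → ρX x = 0
  have hSm : MeasurableSet {y : ℝ | ρY y = 0} := hρYm (measurableSet_singleton 0)
  have h1 : (ℙ.map (fun ω => φ (X ω))) {y : ℝ | ρY y = 0} = 0 := by
    rw [hρY, withDensity_apply _ hSm]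
    rw [setLIntegral_congr_fun hSm (fun y hy =>
      show ENNReal.ofReal (ρY y) = 0 by simp [show ρY y = 0 from hy])]
    simp
  have h2 : (ℙ.map X) (φ ⁻¹' {y : ℝ | ρY y = 0}) = 0 := by
    rw [Measure.map_apply hX (hφm hSm)]
    have heq := Measure.map_apply (μ := ℙ) (f := fun ω => φ (X ω)) (hφm.comp hX) hSm
    rw [heq] at h1
    exact h1
  have h3 : ∀ᵐ x ∂(volume : Measure ℝ), ρY (φ x) = 0 → ρX x = 0 := by
    rw [hρX, withDensity_apply _ (hφm hSm)] at h2
    have := (setLIntegral_eq_zero_iff (hφm hSm)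
      (ENNReal.measurable_ofReal.comp hρXm)).mp h2
    filter_upwards [this] with x hx hx0
    have := hx hx0
    have h4 : ρX x ≤ 0 := by
      by_contra h
      exact absurd this (by simp [ENNReal.ofReal_eq_zero]; linarith)
    linarith [hρX0 x]
  have key : ∀ A : Set (ℝ × ℝ), MeasurableSet A → ∫⁻ p in A, L p ∂ν₁ = μ A := by
    intro A hA
    rw [hν₁, hμ, ← lintegral_indicator hA,
      lintegral_map (hLm.indicator hA) hf,
      show (fun x : ℝ => A.indicator L (x, φ x)) = (A.indicator L ∘ fun x => (x, φ x)) from rfl,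
      lintegral_withDensity_eq_lintegral_mul _ hgm ((hLm.indicator hA).comp hf)]
    rw [show (g * (A.indicator L ∘ fun x => (x, φ x))) = (g * fun x => A.indicator L (x, φ x)) from rfl]
    have step : ∫⁻ x, (g * fun x => A.indicator L (x, φ x)) x ∂volume
        = ∫⁻ x, ((fun x : ℝ => (x, φ x)) ⁻¹' A).indicator
            (fun x => ENNReal.ofReal (ρX x)) x ∂volume := by
      apply lintegral_congr_ae
      filter_upwards [h3] with x hx
      simp only [Pi.mul_apply]
      by_cases hmem : (x, φ x) ∈ A
      · rw [Set.indicator_of_mem hmem,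
          Set.indicator_of_mem (show x ∈ (fun x : ℝ => (x, φ x)) ⁻¹' A from hmem)]
        by_cases h0 : ρY (φ x) = 0
        · simp [hgdef, hLdef, h0, hx h0]
        · have hy : 0 < ρY (φ x) := lt_of_le_of_ne (hρY0 _) (Ne.symm h0)
          have hs : 0 < s x := hspos x
          rw [hgdef, hLdef]
          simp only
          rw [← ENNReal.ofReal_mul (mul_nonneg (mul_nonneg (hρX0 x) (hρY0 _)) hs.le)]
          congr 1
          field_simp
      · rw [Set.indicator_of_notMem hmem,
          Set.indicator_of_notMem
            (show x ∉ (fun x : ℝ => (x, φ x)) ⁻¹' A from hmem), mul_zero]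
    rw [step, lintegral_indicator (hf hA),
      ← withDensity_apply _ (hf hA), ← hρX,
      Measure.map_apply hX (hf hA),
      Measure.map_apply (μ := ℙ) (f := fun ω => (X ω, φ (X ω))) (hX.prodMk (hφm.comp hX)) hA]
    rfl
  refine ⟨Measure.AbsolutelyContinuous.mk fun A hA h0 => ?_, key⟩
  rw [← key A hA, Measure.restrict_eq_zero.mpr h0, lintegral_zero_measure]
end

section
/- Let X ~ N(0,1) and Y = X almost surely, and define the generalized lift function L(x,x) = 2/(π ρ_X(x) √2) (from the general definition with φ(x) = x, so φ' = 1 and ρ_Y = ρ_X). Then the generalized mutual information I(X,Y) = E[log L(X,X)] equals log(√2/π) + log(√(2πe)) = log(2√e/√π); in particular it is finite, and strictly less than I(X_n, Y_n) = −(1/2)log(1−r_n²) for all n large enough when r_n → 1. -/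
open MeasureTheory Filter Topology Real

/-- For `X ~ N(0,1)` and `Y = X` a.s., the generalized lift function
on the diagonal is `L(x,x) = 2/(π ρ_X(x) √2)`, and the generalized mutual
information `I(X,Y) = ∫ log L(x,x) ρ_X(x) dx` equals
`log(√2/π) + log(√(2πe)) = log(2√e/√π)`; in particular it is finite, and
strictly less than `I(X_n,Y_n) = −(1/2)log(1−r_n²)` for all `n` large enough
whenever `r_n → 1` with `|r_n| < 1`. -/
theorem stmt_14
    (ρX : ℝ → ℝ) (hρX : ∀ x, ρX x = (Real.sqrt (2 * π))⁻¹ * Real.exp (-x ^ 2 / 2))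
    (L : ℝ → ℝ) (hL : ∀ x, L x = 2 / (π * ρX x * Real.sqrt 2)) :
    ((∫ x : ℝ, Real.log (L x) * ρX x)
        = Real.log (Real.sqrt 2 / π) + Real.log (Real.sqrt (2 * π * Real.exp 1))) ∧
    ((∫ x : ℝ, Real.log (L x) * ρX x)
        = Real.log (2 * Real.sqrt (Real.exp 1) / Real.sqrt π)) ∧
    (∀ r : ℕ → ℝ, (∀ n, |r n| < 1) → Tendsto r atTop (𝓝 1) →
      ∀ᶠ n in atTop,
        (∫ x : ℝ, Real.log (L x) * ρX x) < -(1 / 2) * Real.log (1 - r n ^ 2)) := by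
  have hπ : (0:ℝ) < π := Real.pi_pos
  have h2π : (0:ℝ) < 2 * π := by positivity
  have hs2π : Real.sqrt (2 * π) ≠ 0 := by positivity
  -- integrability facts
  have hI1 : Integrable (fun x : ℝ => rexp (-(1/2) * x ^ 2)) :=
    integrable_exp_neg_mul_sq (by norm_num)
  have hI2 : Integrable (fun x : ℝ => x ^ 2 * rexp (-(1/2) * x ^ 2)) := by
    have := integrable_rpow_mul_exp_neg_mul_sq (b := 1/2) (by norm_num) (s := 2) (by norm_num)
    refine this.congr (Filter.Eventually.of_forall fun x => ?_)
    norm_num [Real.rpow_natCast]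
  have hg : ∫ x : ℝ, rexp (-(1/2) * x ^ 2) = Real.sqrt (2 * π) := by
    rw [integral_gaussian, show π/(1/2:ℝ) = 2*π by ring]
  -- second moment
  have hmom : ∫ x : ℝ, x ^ 2 * rexp (-(1/2) * x ^ 2) = Real.sqrt (2 * π) := by
    have hderiv : ∀ x : ℝ, HasDerivAt (fun x : ℝ => x * rexp (-(1/2) * x ^ 2))
        (rexp (-(1/2) * x ^ 2) - x ^ 2 * rexp (-(1/2) * x ^ 2)) x := by
      intro x
      have hg' : HasDerivAt (fun x : ℝ => rexp (-(1/2) * x ^ 2))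
          (rexp (-(1/2) * x ^ 2) * (-(1/2) * (2 * x))) x :=
        (((hasDerivAt_pow 2 x).const_mul (-(1/2))).exp).congr_deriv (by ring)
      have : HasDerivAt (fun y : ℝ => y * rexp (-(1/2) * y ^ 2))
          (1 * rexp (-(1/2) * x ^ 2) + id x * (rexp (-(1/2) * x ^ 2) * (-(1/2) * (2 * x)))) x :=
        (hasDerivAt_id x).mul hg'
      convert this using 1
      simp only [id_eq]
      ring
    have hf : Integrable (fun x : ℝ => x * rexp (-(1/2) * x ^ 2)) :=
      integrable_mul_exp_neg_mul_sq (by norm_num)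
    have hz := integral_eq_zero_of_hasDerivAt_of_integrable hderiv (hI1.sub hI2) hf
    rw [integral_sub hI1 hI2, hg, sub_eq_zero] at hz
    exact hz.symm
  set c : ℝ := Real.log 2 - (1/2) * Real.log π with hc
  set a : ℝ := (Real.sqrt (2 * π))⁻¹ with ha
  -- pointwise identity
  have hpt : ∀ x : ℝ, Real.log (L x) * ρX x
      = (c * a) * rexp (-(1/2) * x ^ 2) + (a/2) * (x ^ 2 * rexp (-(1/2) * x ^ 2)) := by
    intro x
    have hexp : Real.exp (-x ^ 2 / 2) = rexp (-(1/2) * x ^ 2) := by ring_nf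
    have hρpos : 0 < ρX x := by rw [hρX x]; positivity
    have hlogρ : Real.log (ρX x) = -((1/2) * (Real.log 2 + Real.log π)) - x ^ 2 / 2 := by
      rw [hρX x, Real.log_mul (by positivity) (Real.exp_ne_zero _), Real.log_inv,
        Real.log_sqrt (le_of_lt h2π), Real.log_exp, Real.log_mul (by norm_num) hπ.ne']
      ring
    have hlogL : Real.log (L x) = c + x ^ 2 / 2 := by
      rw [hL x, Real.log_div (by norm_num) (by positivity),
        Real.log_mul (by positivity) (by positivity),
        Real.log_mul hπ.ne' hρpos.ne', hlogρ, Real.log_sqrt (by norm_num), hc]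
      ring
    rw [hlogL, hρX x, hexp]
    ring
  -- the integral value
  have hint : (∫ x : ℝ, Real.log (L x) * ρX x) = c + 1/2 := by
    rw [integral_congr_ae (Filter.Eventually.of_forall hpt),
      integral_add (hI1.const_mul _) (hI2.const_mul _),
      integral_const_mul, integral_const_mul, hg, hmom, ha]
    field_simp
  have he1 : (0:ℝ) < Real.exp 1 := Real.exp_pos 1
  refine ⟨?_, ?_, ?_⟩
  · rw [hint, Real.log_div (by positivity) hπ.ne', Real.log_sqrt (by norm_num),
      Real.log_sqrt (by positivity), Real.log_mul (by positivity) he1.ne',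
      Real.log_mul (by norm_num) hπ.ne', Real.log_exp, hc]
    ring
  · rw [hint, Real.log_div (by positivity) (by positivity),
      Real.log_mul (by norm_num) (by positivity),
      Real.log_sqrt (le_of_lt he1), Real.log_sqrt hπ.le, Real.log_exp, hc]
    ring
  · intro r hr hlim
    have hpos : ∀ n, 0 < 1 - r n ^ 2 := by
      intro n
      have : r n ^ 2 < 1 := by
        rw [← sq_abs]
        exact pow_lt_one₀ (abs_nonneg _) (hr n) (by norm_num)
      linarith
    have h0 : Tendsto (fun n => 1 - r n ^ 2) atTop (𝓝[>] 0) := by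
      refine tendsto_nhdsWithin_of_tendsto_nhds_of_eventually_within _ ?_
        (Filter.Eventually.of_forall fun n => hpos n)
      have : Tendsto (fun n => 1 - r n ^ 2) atTop (𝓝 (1 - 1 ^ 2)) :=
        (tendsto_const_nhds.sub ((hlim.pow 2)))
      simpa using this
    have hlog : Tendsto (fun n => Real.log (1 - r n ^ 2)) atTop atBot :=
      Real.tendsto_log_nhdsGT_zero.comp h0
    have htop : Tendsto (fun n => -(1/2) * Real.log (1 - r n ^ 2)) atTop atTop := by
      have := (tendsto_neg_atBot_atTop.comp hlog).const_mul_atTop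
        (show (0:ℝ) < 1/2 by norm_num)
      refine this.congr fun n => ?_
      simp [Function.comp]
    filter_upwards [htop.eventually (eventually_gt_atTop (c + 1/2))] with n hn
    rw [hint]; exact hn
end
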